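/- arXiv:1503.01728 — 2 statements merged into one kernel-verified Lean document; each statement's English description precedes it below -/
import Mathlib

section
/- Let M ∈ ℝ^{3×3} and let c ∈ (0, 1) satisfy c·|M|² ≤ (1 − c)². Then for all φ̃ ∈ ℝ and all F̃ ∈ ℝ^{3×3}: |φ̃|² + |sym F̃ + φ̃·M|² ≥ c(|φ̃|² + |sym F̃|²). -/
noncomputable section

attribute [local instance]
  Matrix.frobeniusSeminormedAddCommGroup
  Matrix.frobeniusNormedAddCommGroup
  Matrix.frobeniusNormedSpace

/-- The `3 × 3` real matrices, equipped (locally) with the Frobenius norm. -/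
abbrev M3 : Type := Matrix (Fin 3) (Fin 3) ℝ

/-- The symmetric part `sym F = ½ (F + Fᵀ)`. -/
def symPart (F : M3) : M3 := (2⁻¹ : ℝ) • (F + F.transpose)

theorem statement6 (M : M3) (c : ℝ) (hc0 : 0 < c) (hc1 : c < 1)
    (hcM : c * ‖M‖ ^ 2 ≤ (1 - c) ^ 2) :
    ∀ (φ' : ℝ) (F' : M3),
      |φ'| ^ 2 + ‖symPart F' + φ' • M‖ ^ 2 ≥ c * (|φ'| ^ 2 + ‖symPart F'‖ ^ 2) := by
  intro φ' F'
  set S := symPart F' with hS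
  set a := ‖S + φ' • M‖ with ha
  have ht : ‖φ' • M‖ = |φ'| * ‖M‖ := by rw [norm_smul, Real.norm_eq_abs]
  have h1 : ‖S‖ ≤ a + ‖φ' • M‖ := by
    calc ‖S‖ = ‖(S + φ' • M) - φ' • M‖ := by rw [add_sub_cancel_right]
    _ ≤ a + ‖φ' • M‖ := norm_sub_le _ _
  have h2 : ‖φ' • M‖ ≤ a + ‖S‖ := by
    calc ‖φ' • M‖ = ‖(S + φ' • M) - S‖ := by rw [add_sub_cancel_left]
    _ ≤ a + ‖S‖ := norm_sub_le _ _
  rw [ht] at h1 h2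
  have ha0 : (0:ℝ) ≤ a := norm_nonneg _
  have hs0 : (0:ℝ) ≤ ‖S‖ := norm_nonneg _
  have hp0 : (0:ℝ) ≤ |φ'| := abs_nonneg _
  have hM0 : (0:ℝ) ≤ ‖M‖ := norm_nonneg _
  have hkey : c * (|φ'| * ‖M‖) ^ 2 ≤ (1 - c) ^ 2 * |φ'| ^ 2 := by
    have := mul_le_mul_of_nonneg_right hcM (sq_nonneg |φ'|)
    nlinarith [this]
  nlinarith [mul_nonneg (by linarith : (0:ℝ) ≤ a - (‖S‖ - |φ'| * ‖M‖)) (by linarith : (0:ℝ) ≤ a + (‖S‖ - |φ'| * ‖M‖)),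
    sq_nonneg ((1 - c) * ‖S‖ - |φ'| * ‖M‖), hc0.le, sub_pos.2 hc1,
    mul_pos (sub_pos.2 hc1) (sub_pos.2 hc1)]
end
end

section
/- For every F̃ ∈ ℝ^{3×3}, the quotient dist(Id + t·F̃, SO(3)) / t converges to |sym F̃| as t → 0⁺, i.e. lim_{t→0, t>0} (1/t)·inf_{R ∈ SO(3)} |Id + t·F̃ − R| = |sym F̃|. -/
noncomputable section

attribute [local instance]
  Matrix.frobeniusSeminormedAddCommGroup
  Matrix.frobeniusNormedAddCommGroup
  Matrix.frobeniusNormedSpace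

/-- The special orthogonal group `SO(3)` as a subset of the `3 × 3` matrices. -/
def SO3 : Set M3 := {R : M3 | R.transpose * R = 1 ∧ R.det = 1}

section Aux

attribute [local instance] Matrix.frobeniusNormedRing Matrix.frobeniusNormedAlgebra

open NormedSpace Filter Metric Set

lemma m3_complete : CompleteSpace M3 := FiniteDimensional.complete ℝ M3

attribute [local instance] m3_complete

lemma norm_symPart_le (X : M3) : ‖symPart X‖ ≤ ‖X‖ := by
  have h := norm_add_le X X.transpose
  rw [Matrix.frobenius_norm_transpose] at h
  calc ‖symPart X‖ = 2⁻¹ * ‖X + X.transpose‖ := by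
        rw [symPart, norm_smul]; norm_num
    _ ≤ 2⁻¹ * (‖X‖ + ‖X‖) := by linarith
    _ = ‖X‖ := by ring

lemma one_mem_SO3 : (1 : M3) ∈ SO3 := by
  constructor
  · simp [Matrix.transpose_one]
  · simp

lemma exp_skew_orth {V : M3} (hV : V.transpose = -V) :
    (exp V).transpose * exp V = 1 := by
  have h1 : (exp V).transpose = exp (V.transpose) := (Matrix.exp_transpose V).symm
  rw [h1, hV, ← Matrix.exp_add_of_commute _ _ ((Commute.refl V).neg_left), neg_add_cancel]
  exact exp_zero

lemma exp_skew_mem_SO3 {W : M3} (hW : W.transpose = -W) : exp W ∈ SO3 := by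
  have hskew : ∀ t : ℝ, (t • W).transpose = -(t • W) := fun t => by
    rw [Matrix.transpose_smul, hW, smul_neg]
  have hdet : ∀ t : ℝ, (exp (t • W)).det = 1 ∨ (exp (t • W)).det = -1 := by
    intro t
    have hd := congrArg Matrix.det (exp_skew_orth (hskew t))
    rw [Matrix.det_mul, Matrix.det_transpose, Matrix.det_one] at hd
    exact mul_self_eq_one_iff.mp hd
  have hcont : Continuous fun t : ℝ => (exp (t • W)).det :=
    (exp_continuous.comp (continuous_id.smul continuous_const)).matrix_det
  have h0 : (exp ((0 : ℝ) • W)).det = 1 := by rw [zero_smul, exp_zero, Matrix.det_one]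
  have h1 : (exp ((1 : ℝ) • W)).det = 1 := by
    by_contra h
    have hm1 : (exp ((1 : ℝ) • W)).det = -1 := (hdet 1).resolve_left h
    have hmem : (0 : ℝ) ∈ Set.Icc ((fun t : ℝ => (exp (t • W)).det) 1)
        ((fun t : ℝ => (exp (t • W)).det) 0) := by
      simp only [hm1, h0]; constructor <;> norm_num
    obtain ⟨s, _, hs⟩ := intermediate_value_Icc' (by norm_num : (0:ℝ) ≤ 1)
      hcont.continuousOn hmem
    have hs' : Matrix.det (exp (s • W)) = 0 := hs
    rcases hdet s with h' | h' <;> rw [hs'] at h' <;> norm_num at h'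
  refine ⟨exp_skew_orth hW, ?_⟩
  simpa using h1

lemma exp_taylor_tendsto (W : M3) :
    Tendsto (fun t : ℝ => t⁻¹ * ‖exp (t • W) - 1 - t • W‖)
      (nhdsWithin 0 (Set.Ioi 0)) (nhds 0) := by
  have hd := hasDerivAt_exp_smul_const (𝕂 := ℝ) W (0 : ℝ)
  simp only [zero_smul, exp_zero, one_mul] at hd
  rw [hasDerivAt_iff_isLittleO] at hd
  have hd' : (fun t : ℝ => ‖exp (t • W) - 1 - t • W‖) =o[nhds (0:ℝ)] fun t : ℝ => t := by
    have h := hd.norm_left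
    simp only [zero_smul, exp_zero, sub_zero] at h
    exact h
  have ht := hd'.tendsto_div_nhds_zero
  have : Tendsto (fun t : ℝ => t⁻¹ * ‖exp (t • W) - 1 - t • W‖) (nhds 0) (nhds 0) := by
    simpa [div_eq_inv_mul, mul_comm] using ht
  exact this.mono_left nhdsWithin_le_nhds

lemma symPart_transpose (F : M3) : (symPart F).transpose = symPart F := by
  simp only [symPart, Matrix.transpose_smul, Matrix.transpose_add, Matrix.transpose_transpose]
  module

lemma skew_skew (F : M3) : (F - symPart F).transpose = -(F - symPart F) := by
  rw [Matrix.transpose_sub, symPart_transpose]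
  simp only [symPart]
  module

lemma symPart_add (X Y : M3) : symPart (X + Y) = symPart X + symPart Y := by
  simp only [symPart, Matrix.transpose_add]; module

lemma symPart_smul (c : ℝ) (X : M3) : symPart (c • X) = c • symPart X := by
  simp only [symPart, Matrix.transpose_smul]; module

/-- Lower bound: for every `R ∈ SO3`. -/
lemma lower_bound (F' : M3) {t : ℝ} (ht : 0 < t) {R : M3} (hR : R ∈ SO3) :
    t * ‖symPart F'‖ - 2 * t ^ 2 * ‖F'‖ ^ 2 ≤ dist (1 + t • F') R := by
  set A : M3 := 1 - R with hA
  have hR1 : R.transpose * R = 1 := hR.1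
  have key : A + A.transpose = A.transpose * A := by
    have expand : A.transpose * A = 1 - R - R.transpose + R.transpose * R := by
      simp only [hA, Matrix.transpose_sub, Matrix.transpose_one, Matrix.sub_mul,
        Matrix.mul_sub, Matrix.one_mul, Matrix.mul_one]
      abel
    rw [expand, hR1]
    simp only [hA, Matrix.transpose_sub, Matrix.transpose_one]
    abel
  have hMR : 1 + t • F' - R = t • F' + A := by rw [hA]; abel
  rw [dist_eq_norm, hMR]
  have hsym : symPart (t • F' + A) = t • symPart F' + (2⁻¹ : ℝ) • (A.transpose * A) := by
    rw [symPart_add, symPart_smul, ← key]; rfl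
  have hnF : ‖t • F'‖ = t * ‖F'‖ := by
    rw [norm_smul, Real.norm_eq_abs, abs_of_pos ht]
  have hsymF : ‖symPart F'‖ ≤ ‖F'‖ := norm_symPart_le F'
  have hsq : (0:ℝ) ≤ 2 * t ^ 2 * ‖F'‖ ^ 2 := by positivity
  by_cases hAle : ‖A‖ ≤ 2 * t * ‖F'‖
  · -- small rotation case
    have h1 : ‖symPart (t • F' + A)‖ ≤ ‖t • F' + A‖ := norm_symPart_le _
    have h2 : ‖t • symPart F'‖ ≤ ‖symPart (t • F' + A)‖ + ‖(2⁻¹ : ℝ) • (A.transpose * A)‖ := by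
      have : t • symPart F' = symPart (t • F' + A) - (2⁻¹ : ℝ) • (A.transpose * A) := by
        rw [hsym]; abel
      rw [this]; exact norm_sub_le _ _
    have h3 : ‖(2⁻¹ : ℝ) • (A.transpose * A)‖ ≤ 2 * t ^ 2 * ‖F'‖ ^ 2 := by
      have hm : ‖A.transpose * A‖ ≤ ‖A‖ * ‖A‖ := by
        calc ‖A.transpose * A‖ ≤ ‖A.transpose‖ * ‖A‖ := Matrix.frobenius_norm_mul _ _
          _ = ‖A‖ * ‖A‖ := by rw [Matrix.frobenius_norm_transpose]
      have hAnn : (0:ℝ) ≤ ‖A‖ := norm_nonneg _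
      have hAA : ‖A‖ * ‖A‖ ≤ (2 * t * ‖F'‖) * (2 * t * ‖F'‖) :=
        mul_le_mul hAle hAle hAnn (by positivity)
      calc ‖(2⁻¹ : ℝ) • (A.transpose * A)‖ = 2⁻¹ * ‖A.transpose * A‖ := by
            rw [norm_smul, Real.norm_eq_abs]; norm_num
        _ ≤ 2⁻¹ * ((2 * t * ‖F'‖) * (2 * t * ‖F'‖)) := by nlinarith
        _ = 2 * t ^ 2 * ‖F'‖ ^ 2 := by ring
    have h4 : ‖t • symPart F'‖ = t * ‖symPart F'‖ := by
      rw [norm_smul, Real.norm_eq_abs, abs_of_pos ht]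
    linarith
  · -- far rotation case
    push_neg at hAle
    have h5 : ‖A‖ - ‖t • F'‖ ≤ ‖t • F' + A‖ := by
      have := norm_sub_norm_le A (-(t • F'))
      simpa [sub_neg_eq_add, add_comm] using (norm_sub_norm_le A (-(t • F')))
    have h6 : t * ‖symPart F'‖ ≤ t * ‖F'‖ := by nlinarith
    rw [hnF] at h5
    nlinarith

lemma lower_eventually (F' : M3) :
    ∀ᶠ t : ℝ in nhdsWithin 0 (Set.Ioi 0),
      ‖symPart F'‖ - 2 * t * ‖F'‖ ^ 2 ≤ t⁻¹ * Metric.infDist (1 + t • F') SO3 := by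
  filter_upwards [self_mem_nhdsWithin] with t ht
  have htpos : (0:ℝ) < t := ht
  have hinf : t * ‖symPart F'‖ - 2 * t ^ 2 * ‖F'‖ ^ 2 ≤ Metric.infDist (1 + t • F') SO3 := by
    rw [← not_lt]
    intro hlt
    rw [Metric.infDist_lt_iff ⟨1, one_mem_SO3⟩] at hlt
    obtain ⟨R, hRmem, hdR⟩ := hlt
    exact absurd (lower_bound F' htpos hRmem) (by linarith)
  have := mul_le_mul_of_nonneg_left hinf (inv_nonneg.mpr htpos.le)
  calc ‖symPart F'‖ - 2 * t * ‖F'‖ ^ 2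
      = t⁻¹ * (t * ‖symPart F'‖ - 2 * t ^ 2 * ‖F'‖ ^ 2) := by
        field_simp
    _ ≤ t⁻¹ * Metric.infDist (1 + t • F') SO3 := this

lemma upper_eventually (F' : M3) :
    ∀ᶠ t : ℝ in nhdsWithin 0 (Set.Ioi 0),
      t⁻¹ * Metric.infDist (1 + t • F') SO3 ≤
        ‖symPart F'‖ + t⁻¹ * ‖exp (t • (F' - symPart F')) - 1 - t • (F' - symPart F')‖ := by
  set W : M3 := F' - symPart F' with hW
  filter_upwards [self_mem_nhdsWithin] with t ht
  have htpos : (0:ℝ) < t := ht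
  have hskew : (t • W).transpose = -(t • W) := by
    rw [Matrix.transpose_smul, skew_skew, smul_neg]
  have hmem : exp (t • W) ∈ SO3 := exp_skew_mem_SO3 hskew
  have h1 : Metric.infDist (1 + t • F') SO3 ≤ dist (1 + t • F') (exp (t • W)) :=
    Metric.infDist_le_dist_of_mem hmem
  have halg : 1 + t • F' - exp (t • W) =
      t • symPart F' - (exp (t • W) - 1 - t • W) := by
    have hF : t • F' = t • symPart F' + t • W := by
      rw [hW, smul_sub]; abel
    rw [hF]; abel
  have h2 : dist (1 + t • F') (exp (t • W)) ≤
      t * ‖symPart F'‖ + ‖exp (t • W) - 1 - t • W‖ := by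
    rw [dist_eq_norm, halg]
    calc ‖t • symPart F' - (exp (t • W) - 1 - t • W)‖
        ≤ ‖t • symPart F'‖ + ‖exp (t • W) - 1 - t • W‖ := norm_sub_le _ _
      _ = t * ‖symPart F'‖ + ‖exp (t • W) - 1 - t • W‖ := by
          rw [norm_smul, Real.norm_eq_abs, abs_of_pos htpos]
  have h3 := le_trans h1 h2
  have := mul_le_mul_of_nonneg_left h3 (inv_nonneg.mpr htpos.le)
  calc t⁻¹ * Metric.infDist (1 + t • F') SO3
      ≤ t⁻¹ * (t * ‖symPart F'‖ + ‖exp (t • W) - 1 - t • W‖) := this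
    _ = ‖symPart F'‖ + t⁻¹ * ‖exp (t • W) - 1 - t • W‖ := by
        field_simp

lemma main_aux (F' : M3) :
    Filter.Tendsto (fun t : ℝ => t⁻¹ * Metric.infDist (1 + t • F') SO3)
      (nhdsWithin 0 (Set.Ioi 0)) (nhds ‖symPart F'‖) := by
  have hlow : Tendsto (fun t : ℝ => ‖symPart F'‖ - 2 * t * ‖F'‖ ^ 2)
      (nhdsWithin 0 (Set.Ioi 0)) (nhds ‖symPart F'‖) := by
    have hc : Continuous fun t : ℝ => ‖symPart F'‖ - 2 * t * ‖F'‖ ^ 2 := by continuity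
    have := hc.tendsto 0
    simp only [mul_zero, zero_mul, sub_zero] at this
    exact this.mono_left nhdsWithin_le_nhds
  have hup : Tendsto (fun t : ℝ =>
      ‖symPart F'‖ + t⁻¹ * ‖exp (t • (F' - symPart F')) - 1 - t • (F' - symPart F')‖)
      (nhdsWithin 0 (Set.Ioi 0)) (nhds ‖symPart F'‖) := by
    have := (tendsto_const_nhds (x := ‖symPart F'‖)).add (exp_taylor_tendsto (F' - symPart F'))
    simpa using this
  exact tendsto_of_tendsto_of_tendsto_of_le_of_le' hlow hup
    (lower_eventually F') (upper_eventually F')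

end Aux

theorem statement7 (F' : M3) :
    Filter.Tendsto (fun t : ℝ => t⁻¹ * Metric.infDist (1 + t • F') SO3)
      (nhdsWithin 0 (Set.Ioi 0)) (nhds ‖symPart F'‖) := by
  exact main_aux F'
end
end
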